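/- With J = 2 candidates per query, one from each of two groups, unbiased ranking implies exactly two testable inequalities: E[Y_{j(1)} − Y_{j(2)} | woman ranked first] ≥ 0 and E[Y_{j(1)} − Y_{j(2)} | man ranked first] ≥ 0; conversely, if both hold, there exists an information structure rationalizing the observed distribution as unbiased ranking. -/

import Mathlib

open MeasureTheory ProbabilityTheory

/-- A function measurable w.r.t. a comap σ-algebra factors through the comapped map,
as long as the codomain has measurable singletons. -/
lemma stmt14_comap_factors {Ω α β : Type*} {mα : MeasurableSpace α}
    [MeasurableSpace β] [MeasurableSingletonClass β] {f : Ω → α} {h : Ω → β}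
    (hh : Measurable[mα.comap f] h) {x y : Ω} (hxy : f x = f y) : h x = h y := by
  obtain ⟨t, -, ht⟩ := MeasurableSpace.measurableSet_comap.mp
    (hh (measurableSet_singleton (h x)))
  have hx : x ∈ f ⁻¹' t := by rw [ht]; exact rfl
  have hy : y ∈ f ⁻¹' t := by simpa only [Set.mem_preimage, ← hxy] using hx
  rw [ht] at hy
  exact (hy : h y = h x).symm

lemma stmt14_cond_nonneg_iff {Ω : Type*} {mΩ : MeasurableSpace Ω} (μ : Measure Ω)
    [IsFiniteMeasure μ] {A : Set Ω} (hA : μ A ≠ 0) (g : Ω → ℝ) :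
    0 ≤ ∫ ω, g ω ∂(μ[|A]) ↔ 0 ≤ ∫ ω in A, g ω ∂μ := by
  rw [ProbabilityTheory.cond, integral_smul_measure, smul_eq_mul]
  have hpos : 0 < ((μ A)⁻¹).toReal :=
    ENNReal.toReal_pos (by simp [measure_ne_top μ A]) (by simp [hA])
  rw [mul_nonneg_iff_of_pos_left hpos]

/-- The information σ-algebra generated by the group variable. -/
abbrev stmt14_m {Ω : Type*} (f : Ω → Bool) : MeasurableSpace Ω :=
  MeasurableSpace.comap f inferInstance

/-- Forward direction core: the swap-vs-identity comparison integrated over an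
`m`-measurable set yields the testable inequality on that set. -/
lemma stmt14_fwd {Ω : Type*} (m : MeasurableSpace Ω) {mΩ : MeasurableSpace Ω}
    (hm : m ≤ mΩ) (μ : Measure Ω) [IsProbabilityMeasure μ]
    (Y : Fin 2 → Ω → ℝ) (hY : ∀ r, Integrable (Y r) μ)
    {A : Set Ω} (hAm : MeasurableSet[m] A)
    (hae : ∀ᵐ ω ∂μ,
      (μ[fun ω' => ∑ r, (if r = 0 then (2:ℝ) else 1) * Y (Equiv.swap 0 1 r) ω' | m]) ω ≤
      (μ[fun ω' => ∑ r, (if r = 0 then (2:ℝ) else 1) * Y r ω' | m]) ω) :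
    0 ≤ ∫ ω in A, (Y 0 ω - Y 1 ω) ∂μ := by
  have hswap : Integrable
      (fun ω => ∑ r, (if r = 0 then (2:ℝ) else 1) * Y (Equiv.swap 0 1 r) ω) μ := by
    simp only [Fin.sum_univ_two]
    exact ((hY _).const_mul _).add ((hY _).const_mul _)
  have hid : Integrable (fun ω => ∑ r, (if r = 0 then (2:ℝ) else 1) * Y r ω) μ := by
    simp only [Fin.sum_univ_two]
    exact ((hY _).const_mul _).add ((hY _).const_mul _)
  have h2 : ∫ ω in A, (∑ r, (if r = 0 then (2:ℝ) else 1) * Y (Equiv.swap 0 1 r) ω) ∂μ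
      ≤ ∫ ω in A, (∑ r, (if r = 0 then (2:ℝ) else 1) * Y r ω) ∂μ := by
    rw [← setIntegral_condExp hm hswap hAm, ← setIntegral_condExp hm hid hAm]
    exact setIntegral_mono_ae integrable_condExp.integrableOn
      integrable_condExp.integrableOn hae
  have h3 : ∫ ω in A, (Y 0 ω - Y 1 ω) ∂μ
      = ∫ ω in A, (∑ r, (if r = 0 then (2:ℝ) else 1) * Y r ω) ∂μ -
        ∫ ω in A, (∑ r, (if r = 0 then (2:ℝ) else 1) * Y (Equiv.swap 0 1 r) ω) ∂μ := by
    rw [← integral_sub hid.integrableOn hswap.integrableOn]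
    apply integral_congr_ae
    filter_upwards with ω
    norm_num [Fin.sum_univ_two, Equiv.swap_apply_left, Equiv.swap_apply_right]
    ring
  linarith

/-- Backward direction core: if the two testable inequalities hold, then w.r.t. the σ-algebra
generated by the group variable, the identity ranking maximizes the conditional objective. -/
lemma stmt14_bwd {Ω : Type*} (f : Ω → Bool) {mΩ : MeasurableSpace Ω}
    (μ : Measure Ω) [IsProbabilityMeasure μ]
    (Y : Fin 2 → Ω → ℝ) (hY : ∀ r, Integrable (Y r) μ)
    (hfmeas : Measurable f)
    (hμT : μ (f ⁻¹' {true}) ≠ 0) (hμF : μ (f ⁻¹' {false}) ≠ 0)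
    (hT : 0 ≤ ∫ ω in f ⁻¹' {true}, (Y 0 ω - Y 1 ω) ∂μ)
    (hF : 0 ≤ ∫ ω in f ⁻¹' {false}, (Y 0 ω - Y 1 ω) ∂μ)
    (w : Fin 2 → ℝ) (hw : StrictAnti w)
    (σ : Ω → Equiv.Perm (Fin 2)) (hσ : ∀ r, Measurable[stmt14_m f] fun ω => σ ω r) :
    ∀ᵐ ω ∂μ, (μ[fun ω' => ∑ r, w r * Y (σ ω' r) ω' | stmt14_m f]) ω ≤
        (μ[fun ω' => ∑ r, w r * Y r ω' | stmt14_m f]) ω := by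
  classical
  have hfin2 : ∀ i : Fin 2, i = 0 ∨ i = 1 := by decide
  have hm : stmt14_m f ≤ mΩ := hfmeas.comap_le
  have hAm : ∀ b : Bool, MeasurableSet[stmt14_m f] (f ⁻¹' {b}) :=
    fun b => ⟨{b}, measurableSet_singleton b, rfl⟩
  have hint : ∀ (π : Equiv.Perm (Fin 2)),
      Integrable (fun ω => ∑ r, w r * Y (π r) ω) μ := by
    intro π
    simp only [Fin.sum_univ_two]
    exact ((hY _).const_mul _).add ((hY _).const_mul _)
  have hD : Integrable (fun ω => Y 0 ω - Y 1 ω) μ := (hY 0).sub (hY 1)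
  have hσconst : ∀ x y : Ω, f x = f y → σ x = σ y := by
    intro x y hxy
    exact Equiv.ext fun r => stmt14_comap_factors (hσ r) hxy
  obtain ⟨xT, hxT⟩ : (f ⁻¹' {true}).Nonempty := nonempty_of_measure_ne_zero hμT
  obtain ⟨xF, hxF⟩ : (f ⁻¹' {false}).Nonempty := nonempty_of_measure_ne_zero hμF
  have hF1eq : (fun ω' => ∑ r, w r * Y (σ ω' r) ω') = (f ⁻¹' {true}).piecewise
      (fun ω' => ∑ r, w r * Y (σ xT r) ω') (fun ω' => ∑ r, w r * Y (σ xF r) ω') := by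
    funext ω
    by_cases hω : ω ∈ f ⁻¹' {true}
    · rw [Set.piecewise_eq_of_mem _ _ _ hω]
      have hσω : σ ω = σ xT := hσconst ω xT (by
        have h1 : f ω = true := hω
        have h2 : f xT = true := hxT
        rw [h1, h2])
      simp only [hσω]
    · rw [Set.piecewise_eq_of_notMem _ _ _ hω]
      have hσω : σ ω = σ xF := hσconst ω xF (by
        have h1 : f ω = false := by
          have h1' : ¬ f ω = true := hω
          exact Bool.eq_false_iff.mpr h1'
        have h2 : f xF = false := hxF
        rw [h1, h2])
      simp only [hσω]
  have hF1int : Integrable (fun ω' => ∑ r, w r * Y (σ ω' r) ω') μ := by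
    rw [hF1eq]
    exact Integrable.piecewise (hm _ (hAm true))
      (hint (σ xT)).integrableOn (hint (σ xF)).integrableOn
  have hF2int : Integrable (fun ω' => ∑ r, w r * Y r ω') μ := hint 1
  -- conditional expectation of Y0 - Y1 is nonneg on each fiber
  have hcond : ∀ b : Bool, (0 ≤ ∫ ω in f ⁻¹' {b}, (Y 0 ω - Y 1 ω) ∂μ) →
      ∀ ω ∈ f ⁻¹' {b}, 0 ≤ (μ[fun ω' => Y 0 ω' - Y 1 ω'|stmt14_m f]) ω := by
    intro b hib ω hω
    have hgm : Measurable[stmt14_m f] (μ[fun ω' => Y 0 ω' - Y 1 ω'|stmt14_m f]) :=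
      stronglyMeasurable_condExp.measurable
    have hA : MeasurableSet (f ⁻¹' {b}) := hm _ (hAm b)
    have hconst : ∀ x ∈ f ⁻¹' {b},
        (μ[fun ω' => Y 0 ω' - Y 1 ω'|stmt14_m f]) x
          = (μ[fun ω' => Y 0 ω' - Y 1 ω'|stmt14_m f]) ω := by
      intro x hx
      exact stmt14_comap_factors hgm (by
        have h1 : f x = b := hx
        have h2 : f ω = b := hω
        rw [h1, h2])
    have hI : ∫ x in f ⁻¹' {b}, (μ[fun ω' => Y 0 ω' - Y 1 ω'|stmt14_m f]) x ∂μ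
        = ∫ x in f ⁻¹' {b}, (Y 0 x - Y 1 x) ∂μ :=
      setIntegral_condExp hm hD (hAm b)
    have hI2 : ∫ x in f ⁻¹' {b}, (μ[fun ω' => Y 0 ω' - Y 1 ω'|stmt14_m f]) x ∂μ
        = (μ (f ⁻¹' {b})).toReal * (μ[fun ω' => Y 0 ω' - Y 1 ω'|stmt14_m f]) ω := by
      rw [setIntegral_congr_fun hA hconst, setIntegral_const, smul_eq_mul, measureReal_def]
    have hpos : 0 < (μ (f ⁻¹' {b})).toReal :=
      ENNReal.toReal_pos (by cases b <;> assumption) (measure_ne_top μ _)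
    nlinarith [hib, hI, hI2, hpos]
  -- main per-fiber argument
  have main : ∀ (b : Bool) (x : Ω), x ∈ f ⁻¹' {b} →
      (0 ≤ ∫ ω in f ⁻¹' {b}, (Y 0 ω - Y 1 ω) ∂μ) →
      ∀ᵐ ω ∂μ, ω ∈ f ⁻¹' {b} →
        (μ[fun ω' => ∑ r, w r * Y (σ ω' r) ω'|stmt14_m f]) ω ≤
          (μ[fun ω' => ∑ r, w r * Y r ω'|stmt14_m f]) ω := by
    intro b x hx hib
    have hg : Integrable (fun ω' => ∑ r, w r * Y (σ x r) ω') μ := hint (σ x)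
    have hind : (f ⁻¹' {b}).indicator (fun ω' => ∑ r, w r * Y (σ ω' r) ω')
        = (f ⁻¹' {b}).indicator (fun ω' => ∑ r, w r * Y (σ x r) ω') := by
      funext ω
      by_cases hω : ω ∈ f ⁻¹' {b}
      · rw [Set.indicator_of_mem hω, Set.indicator_of_mem hω]
        have hσω : σ ω = σ x := hσconst ω x (by
          have h1 : f ω = b := hω
          have h2 : f x = b := hx
          rw [h1, h2])
        simp only [hσω]
      · rw [Set.indicator_of_notMem hω, Set.indicator_of_notMem hω]
    have e1 := condExp_indicator (μ := μ) hF1int (hAm b)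
    have e2 := condExp_indicator (μ := μ) hg (hAm b)
    rw [hind] at e1
    have heqS : (f ⁻¹' {b}).indicator (μ[fun ω' => ∑ r, w r * Y (σ ω' r) ω'|stmt14_m f])
        =ᵐ[μ] (f ⁻¹' {b}).indicator (μ[fun ω' => ∑ r, w r * Y (σ x r) ω'|stmt14_m f]) :=
      e1.symm.trans e2
    rcases hfin2 (σ x 0) with hc | hc
    · -- σ x = identity
      have hc1 : σ x 1 = 1 := by
        rcases hfin2 (σ x 1) with hc1 | hc1
        · exact absurd ((σ x).injective (hc1.trans hc.symm)) (by decide)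
        · exact hc1
      have hgF2 : (fun ω' => ∑ r, w r * Y (σ x r) ω') = (fun ω' => ∑ r, w r * Y r ω') := by
        funext ω'
        simp only [Fin.sum_univ_two, hc, hc1]
      rw [hgF2] at heqS
      filter_upwards [heqS] with ω hωeq hmem
      rw [Set.indicator_of_mem hmem, Set.indicator_of_mem hmem] at hωeq
      exact hωeq.le
    · -- σ x = swap
      have hc1 : σ x 1 = 0 := by
        rcases hfin2 (σ x 1) with hc1 | hc1
        · exact hc1
        · exact absurd ((σ x).injective (hc1.trans hc.symm)) (by decide)
      have hcpos : 0 < w 0 - w 1 := by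
        have := hw (show (0 : Fin 2) < 1 by decide)
        linarith
      have hF2g : (fun ω' => ∑ r, w r * Y r ω')
          = (fun ω' => ∑ r, w r * Y (σ x r) ω')
              + (w 0 - w 1) • (fun ω' => Y 0 ω' - Y 1 ω') := by
        funext ω'
        simp only [Fin.sum_univ_two, hc, hc1, Pi.add_apply, Pi.smul_apply, smul_eq_mul]
        ring
      have e3 : μ[fun ω' => ∑ r, w r * Y r ω'|stmt14_m f]
          =ᵐ[μ] μ[fun ω' => ∑ r, w r * Y (σ x r) ω'|stmt14_m f]
            + μ[(w 0 - w 1) • fun ω' => Y 0 ω' - Y 1 ω'|stmt14_m f] := by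
        rw [hF2g]
        exact condExp_add hg (hD.smul (w 0 - w 1)) _
      have e4 : μ[(w 0 - w 1) • fun ω' => Y 0 ω' - Y 1 ω'|stmt14_m f]
          =ᵐ[μ] (w 0 - w 1) • μ[fun ω' => Y 0 ω' - Y 1 ω'|stmt14_m f] :=
        condExp_smul (w 0 - w 1) _ _
      filter_upwards [heqS, e3, e4] with ω hωeq he3 he4 hmem
      rw [Set.indicator_of_mem hmem, Set.indicator_of_mem hmem] at hωeq
      have h2 : 0 ≤ (μ[fun ω' => Y 0 ω' - Y 1 ω'|stmt14_m f]) ω := hcond b hib ω hmem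
      have h3 : (μ[fun ω' => ∑ r, w r * Y r ω'|stmt14_m f]) ω =
          (μ[fun ω' => ∑ r, w r * Y (σ x r) ω'|stmt14_m f]) ω
            + (w 0 - w 1) * (μ[fun ω' => Y 0 ω' - Y 1 ω'|stmt14_m f]) ω := by
        rw [he3, Pi.add_apply, he4, Pi.smul_apply, smul_eq_mul]
      rw [hωeq, h3]
      nlinarith
  have mT := main true xT hxT hT
  have mF := main false xF hxF hF
  filter_upwards [mT, mF] with ω hωT hωF
  by_cases hb : f ω = true
  · exact hωT hb
  · exact hωF (show f ω ∈ ({false} : Set Bool) from Bool.eq_false_iff.mpr hb)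

theorem stmt14 {Ω : Type*} {mΩ : MeasurableSpace Ω}
    (μ : Measure Ω) [IsProbabilityMeasure μ]
    (Y : Fin 2 → Ω → ℝ) (hY : ∀ r, Integrable (Y r) μ)
    (Grank : Ω → Fin 2 → Bool) (honeEach : ∀ ω, Grank ω 0 ≠ Grank ω 1)
    (hGmeas : Measurable Grank)
    (h0 : 0 < μ {ω | Grank ω 0 = true}) (h1 : 0 < μ {ω | Grank ω 0 = false}) :
    (∃ m : MeasurableSpace Ω, m ≤ mΩ ∧ Measurable[m] Grank ∧
        ∀ w : Fin 2 → ℝ, StrictAnti w → (∀ r, 0 < w r) →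
          ∀ σ : Ω → Equiv.Perm (Fin 2), (∀ r, Measurable[m] fun ω => σ ω r) →
            ∀ᵐ ω ∂μ, (μ[fun ω' => ∑ r, w r * Y (σ ω' r) ω' | m]) ω ≤
              (μ[fun ω' => ∑ r, w r * Y r ω' | m]) ω) ↔
      (0 ≤ ∫ ω, (Y 0 ω - Y 1 ω) ∂(μ[|{ω | Grank ω 0 = true}]) ∧
        0 ≤ ∫ ω, (Y 0 ω - Y 1 ω) ∂(μ[|{ω | Grank ω 0 = false}])) := by
  classical
  have hfin2 : ∀ i : Fin 2, i = 0 ∨ i = 1 := by decide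
  have hfmeas : Measurable (fun ω => Grank ω 0) := (measurable_pi_apply 0).comp hGmeas
  have hsetT : {ω | Grank ω 0 = true} = (fun ω => Grank ω 0) ⁻¹' {true} := rfl
  have hsetF : {ω | Grank ω 0 = false} = (fun ω => Grank ω 0) ⁻¹' {false} := rfl
  have hμT : μ ((fun ω => Grank ω 0) ⁻¹' {true}) ≠ 0 := by rw [← hsetT]; exact h0.ne'
  have hμF : μ ((fun ω => Grank ω 0) ⁻¹' {false}) ≠ 0 := by rw [← hsetF]; exact h1.ne'
  constructor
  · rintro ⟨m, hm, hGm, hmax⟩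
    have hw : StrictAnti (fun r : Fin 2 => if r = 0 then (2:ℝ) else 1) := by
      intro a c hac
      fin_cases a <;> fin_cases c <;> simp_all
    have hwpos : ∀ r : Fin 2, 0 < (if r = 0 then (2:ℝ) else 1) := by
      intro r; by_cases hr : r = 0 <;> simp [hr]
    have hae := hmax (fun r : Fin 2 => if r = 0 then (2:ℝ) else 1) hw hwpos
      (fun _ => Equiv.swap 0 1) (fun _ => measurable_const)
    have hAm : ∀ b : Bool, MeasurableSet[m] ((fun ω => Grank ω 0) ⁻¹' {b}) := by
      intro b
      have heq : (fun ω => Grank ω 0) ⁻¹' {b}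
          = Grank ⁻¹' ((fun g : Fin 2 → Bool => g 0) ⁻¹' {b}) := rfl
      rw [heq]
      exact hGm ((measurable_pi_apply 0) (measurableSet_singleton b))
    constructor
    · rw [hsetT, stmt14_cond_nonneg_iff μ hμT]
      exact stmt14_fwd m hm μ Y hY (hAm true) hae
    · rw [hsetF, stmt14_cond_nonneg_iff μ hμF]
      exact stmt14_fwd m hm μ Y hY (hAm false) hae
  · rintro ⟨hT, hF⟩
    rw [hsetT, stmt14_cond_nonneg_iff μ hμT] at hT
    rw [hsetF, stmt14_cond_nonneg_iff μ hμF] at hF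
    refine ⟨stmt14_m (fun ω => Grank ω 0), hfmeas.comap_le, ?_, ?_⟩
    · -- Grank is measurable w.r.t. the generated σ-algebra
      have hf_m : Measurable[stmt14_m (fun ω => Grank ω 0)] (fun ω => Grank ω 0) :=
        fun s hs => ⟨s, hs, rfl⟩
      have hG : Grank = (fun b : Bool => fun r : Fin 2 => if r = 0 then b else !b)
          ∘ (fun ω => Grank ω 0) := by
        funext ω r
        rcases hfin2 r with hr | hr
        · subst hr; simp
        · subst hr
          have h := honeEach ω
          simp only [Function.comp_apply]
          cases h0' : Grank ω 0 <;> cases h1' : Grank ω 1 <;> simp_all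
      rw [hG]
      exact Measurable.comp (measurable_from_top) hf_m
    · intro w hw hwpos σ hσ
      exact stmt14_bwd (fun ω => Grank ω 0) μ Y hY hfmeas hμT hμF hT hF w hw σ hσ
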